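/- Let r ≥ 2, let Δ(C_r) be the convex hull of {2e_i, −2e_i : 1 ≤ i ≤ r} in ℝ^r, and let σ be the convex cone generated by Δ(C_r) − 2e_1. Then 2e_2 − 2e_1 ∈ σ, but −2e_1 − (2e_2 − 2e_1) = −2e_2 ∉ σ. -/

import Mathlib

noncomputable section

/-- The standard basis vector `e i` of `ℝ^r` (0-based: `b r 0` is `e₁`, `b r 1` is `e₂`). -/
def b (r : ℕ) (i : Fin r) : Fin r → ℝ := Pi.single i 1

/-- The long roots `±2e_i` of type `C_r`. -/
def longRootsC (r : ℕ) : Set (Fin r → ℝ) :=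
  {v | ∃ i : Fin r, v = (2 : ℝ) • b r i ∨ v = -((2 : ℝ) • b r i)}

/-- The root polytope `Δ(C_r)`: the convex hull of the long roots `±2e_i`. -/
def DeltaC (r : ℕ) : Set (Fin r → ℝ) := convexHull ℝ (longRootsC r)

/-- The convex cone generated by a set `S`: all finite sums of nonnegative real multiples
of elements of `S`. -/
def coneGen {V : Type*} [AddCommMonoid V] [Module ℝ V] (S : Set V) : Set V :=
  {x | ∃ (n : ℕ) (c : Fin n → ℝ) (f : Fin n → V),
    (∀ i, 0 ≤ c i) ∧ (∀ i, f i ∈ S) ∧ x = ∑ i, c i • f i}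

lemma key (r : ℕ) (h0 : 0 < r) (h1 : 1 < r) :
    ∀ v ∈ DeltaC r, v ⟨0, h0⟩ - v ⟨1, h1⟩ ≤ 2 := by
  have h : DeltaC r ⊆ {v | v ⟨0, h0⟩ - v ⟨1, h1⟩ ≤ 2} := by
    apply convexHull_min _ ?_
    · rintro v ⟨i, hv | hv⟩ <;> subst hv <;>
        simp only [Set.mem_setOf_eq, b, Pi.neg_apply, Pi.smul_apply, Pi.single_apply,
          smul_eq_mul] <;> split_ifs <;> norm_num
    · exact convex_halfSpace_le
        (IsLinearMap.mk (fun x y => by simp; ring) (fun c x => by simp; ring)) 2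
  exact fun v hv => h hv

theorem stmt16 (r : ℕ) (hr : 2 ≤ r) :
    (2 : ℝ) • b r ⟨1, by omega⟩ - (2 : ℝ) • b r ⟨0, by omega⟩ ∈
      coneGen ((fun x => x - (2 : ℝ) • b r ⟨0, by omega⟩) '' DeltaC r) ∧
    -((2 : ℝ) • b r ⟨1, by omega⟩) ∉
      coneGen ((fun x => x - (2 : ℝ) • b r ⟨0, by omega⟩) '' DeltaC r) := by
  constructor
  · refine ⟨1, fun _ => 1, fun _ => (2 : ℝ) • b r ⟨1, by omega⟩ - (2 : ℝ) • b r ⟨0, by omega⟩,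
      fun _ => zero_le_one, fun _ => ⟨(2 : ℝ) • b r ⟨1, by omega⟩, ?_, rfl⟩, by simp⟩
    exact subset_convexHull ℝ _ ⟨⟨1, by omega⟩, Or.inl rfl⟩
  · rintro ⟨n, c, f, hc, hf, heq⟩
    have h0 := congrFun heq ⟨0, by omega⟩
    have h1 := congrFun heq ⟨1, by omega⟩
    have hne : (⟨0, by omega⟩ : Fin r) ≠ ⟨1, by omega⟩ := by
      simp [Fin.ext_iff]
    simp only [Finset.sum_apply, Pi.smul_apply, Pi.neg_apply, smul_eq_mul, b,
      Pi.single_apply] at h0 h1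
    norm_num at h0 h1
    have hfle : ∀ i, f i ⟨0, by omega⟩ - f i ⟨1, by omega⟩ ≤ 0 := by
      intro i
      obtain ⟨v, hv, hvf⟩ := hf i
      have := key r (by omega) (by omega) v hv
      have h2 : f i = v - (2 : ℝ) • b r ⟨0, by omega⟩ := hvf.symm
      rw [h2]
      simp only [Pi.sub_apply, Pi.smul_apply, b, Pi.single_apply, smul_eq_mul,
        if_pos rfl, if_neg hne.symm]
      norm_num
      linarith
    have hsum : ∑ i, c i * f i ⟨0, by omega⟩ - ∑ i, c i * f i ⟨1, by omega⟩ ≤ 0 := by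
      rw [← Finset.sum_sub_distrib]
      apply Finset.sum_nonpos
      intro i _
      rw [← mul_sub]
      exact mul_nonpos_of_nonneg_of_nonpos (hc i) (hfle i)
    rw [← h0, ← h1] at hsum
    norm_num at hsum
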